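/- Let P and Q be probability measures on a common measurable space with P ≪ Q, and suppose the Radon–Nikodym derivative r = dP/dQ has an atomless (continuous) distribution under Q. Let V ∼ P and W ∼ Q be independent random elements. Then (1/4)·E_Q|r(W) − 1| ≤ 1/2 − P(r(V) < r(W)) ≤ (1/2)·E_Q|r(W) − 1|. -/

import Mathlib

open MeasureTheory ProbabilityTheory

open scoped ENNReal

namespace Stmt0Aux

variable {α : Type*} [MeasurableSpace α]

lemma prod_eq_withDensity (P Q : Measure α) [IsProbabilityMeasure P] [IsProbabilityMeasure Q]
    (hac : P ≪ Q) :
    P.prod Q = (Q.prod Q).withDensity (fun z => P.rnDeriv Q z.1) := by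
  have hf : Measurable (P.rnDeriv Q) := Measure.measurable_rnDeriv P Q
  conv_lhs => rw [← Measure.withDensity_rnDeriv_eq P Q hac]
  ext s hs
  have hg : Measurable (fun z : α × α => P.rnDeriv Q z.1) := hf.comp measurable_fst
  rw [Measure.prod_apply hs, withDensity_apply _ hs,
    lintegral_withDensity_eq_lintegral_mul _ hf (measurable_measure_prodMk_left hs),
    ← lintegral_indicator hs _,
    lintegral_prod _ ((hg.indicator hs)).aemeasurable]
  congr 1
  ext x
  have h1 : (fun y => s.indicator (fun z : α × α => P.rnDeriv Q z.1) (x, y))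
      = (Prod.mk x ⁻¹' s).indicator (fun _ => P.rnDeriv Q x) := by
    ext y
    by_cases h : (x, y) ∈ s <;> simp [Set.indicator, h, Set.mem_preimage]
  rw [h1, lintegral_indicator (measurable_prodMk_left hs) _, setLIntegral_const]
  rfl

/-- integral of a function composed with `fst` over a product of probability measures -/
lemma integral_comp_fst (Q : Measure α) [IsProbabilityMeasure Q] {F : α → ℝ}
    (hF : AEStronglyMeasurable F Q) :
    ∫ z : α × α, F z.1 ∂(Q.prod Q) = ∫ x, F x ∂Q := by
  have hmap : (Q.prod Q).map Prod.fst = Q := by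
    rw [Measure.map_fst_prod]; simp
  conv_rhs => rw [← hmap]
  rw [integral_map measurable_fst.aemeasurable (by rw [hmap]; exact hF)]

lemma integrable_comp_fst (Q : Measure α) [IsProbabilityMeasure Q] {F : α → ℝ}
    (hF : Integrable F Q) :
    Integrable (fun z : α × α => F z.1) (Q.prod Q) := by
  have hmap : (Q.prod Q).map Prod.fst = Q := by
    rw [Measure.map_fst_prod]; simp
  have := (integrable_map_measure (f := Prod.fst) (g := F)
      (by rw [hmap]; exact hF.aestronglyMeasurable) measurable_fst.aemeasurable).mp
      (by rw [hmap]; exact hF)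
  exact this

lemma integral_comp_snd (Q : Measure α) [IsProbabilityMeasure Q] {F : α → ℝ}
    (hF : AEStronglyMeasurable F Q) :
    ∫ z : α × α, F z.2 ∂(Q.prod Q) = ∫ x, F x ∂Q := by
  have hmap : (Q.prod Q).map Prod.snd = Q := by
    rw [Measure.map_snd_prod]; simp
  conv_rhs => rw [← hmap]
  rw [integral_map measurable_snd.aemeasurable (by rw [hmap]; exact hF)]

lemma integrable_comp_snd (Q : Measure α) [IsProbabilityMeasure Q] {F : α → ℝ}
    (hF : Integrable F Q) :
    Integrable (fun z : α × α => F z.2) (Q.prod Q) := by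
  have hmap : (Q.prod Q).map Prod.snd = Q := by
    rw [Measure.map_snd_prod]; simp
  have := (integrable_map_measure (f := Prod.snd) (g := F)
      (by rw [hmap]; exact hF.aestronglyMeasurable) measurable_snd.aemeasurable).mp
      (by rw [hmap]; exact hF)
  exact this

/-- swap invariance of integrals over `Q.prod Q` -/
lemma integral_swap_eq (Q : Measure α) [IsProbabilityMeasure Q] {F : α × α → ℝ}
    (hF : AEStronglyMeasurable F (Q.prod Q)) :
    ∫ z, F (Prod.swap z) ∂(Q.prod Q) = ∫ z, F z ∂(Q.prod Q) := by
  conv_rhs => rw [← Measure.prod_swap (μ := Q) (ν := Q)]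
  rw [integral_map measurable_swap.aemeasurable (by rw [Measure.prod_swap]; exact hF)]

end Stmt0Aux

/-- For probability measures `P ≪ Q` with Radon–Nikodym derivative `r`
whose distribution under `Q` is atomless, and independent `V ∼ P`, `W ∼ Q`,
`(1/4)·E_Q|r − 1| ≤ 1/2 − P(r(V) < r(W)) ≤ (1/2)·E_Q|r − 1|`. -/
theorem stmt_0 {α : Type*} [MeasurableSpace α]
    (P Q : Measure α) [IsProbabilityMeasure P] [IsProbabilityMeasure Q]
    (hac : P ≪ Q)
    (r : α → ℝ) (hr : r = fun x => (P.rnDeriv Q x).toReal)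
    (hcont : ∀ t : ℝ, Q {x | r x = t} = 0) :
    (1 / 4) * (∫ x, |r x - 1| ∂Q)
        ≤ 1 / 2 - ((P.prod Q) {p : α × α | r p.1 < r p.2}).toReal
      ∧ 1 / 2 - ((P.prod Q) {p : α × α | r p.1 < r p.2}).toReal
        ≤ (1 / 2) * (∫ x, |r x - 1| ∂Q) := by
  classical
  have hfm : Measurable (P.rnDeriv Q) := Measure.measurable_rnDeriv P Q
  have hrm : Measurable r := by rw [hr]; exact hfm.ennreal_toReal
  set Q2 := Q.prod Q with hQ2
  -- basic integrability
  have hint_r : Integrable r Q := by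
    rw [hr]; exact Measure.integrable_toReal_rnDeriv
  have hint1 : ∫ x, r x ∂Q = 1 := by
    rw [hr, Measure.integral_toReal_rnDeriv hac]
    simp
  -- the sets
  set A : Set (α × α) := {z : α × α | r z.1 < r z.2} with hA_def
  set B : Set (α × α) := {z : α × α | r z.2 < r z.1} with hB_def
  have hA : MeasurableSet A := measurableSet_lt (hrm.comp measurable_fst) (hrm.comp measurable_snd)
  have hB : MeasurableSet B := measurableSet_lt (hrm.comp measurable_snd) (hrm.comp measurable_fst)
  -- diagonal is null
  have hC0 : Q2 {z : α × α | r z.1 = r z.2} = 0 := by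
    have hCm : MeasurableSet {z : α × α | r z.1 = r z.2} :=
      measurableSet_eq_fun (hrm.comp measurable_fst) (hrm.comp measurable_snd)
    rw [hQ2, Measure.prod_apply hCm]
    have hx : ∀ x, Q (Prod.mk x ⁻¹' {z : α × α | r z.1 = r z.2}) = 0 := by
      intro x
      have hset : (Prod.mk x ⁻¹' {z : α × α | r z.1 = r z.2}) = {y | r y = r x} :=
        Set.ext fun y => ⟨fun h => h.symm, fun h => h.symm⟩
      rw [hset]; exact hcont (r x)
    have := lintegral_congr (μ := Q) hx
    simpa using this
  -- A-complement agrees with B a.e.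
  have hAcB : Aᶜ =ᵐ[Q2] B := by
    apply (MeasureTheory.ae_eq_set).2
    constructor
    · apply measure_mono_null _ hC0
      intro z hz
      have h1 : ¬ r z.1 < r z.2 := hz.1
      have h2 : ¬ r z.2 < r z.1 := hz.2
      show r z.1 = r z.2
      linarith [not_lt.1 h1, not_lt.1 h2]
    · have hBA : B \ Aᶜ = ∅ := by
        ext z
        simp only [Set.mem_diff, Set.mem_compl_iff, hA_def, hB_def, Set.mem_setOf_eq,
          not_not, Set.mem_empty_iff_false, iff_false, not_and]
        intro h1 h2
        exact absurd h2 (asymm h1)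
      exact measure_mono_null hBA.le measure_empty
  -- integrability over the product
  have hintg : Integrable (fun z : α × α => r z.1) Q2 := Stmt0Aux.integrable_comp_fst Q hint_r
  have hinth : Integrable (fun z : α × α => r z.2) Q2 := Stmt0Aux.integrable_comp_snd Q hint_r
  have hIint : Integrable (fun z : α × α => |r z.1 - r z.2|) Q2 := (hintg.sub hinth).abs
  -- marginal integrals
  have hg1 : ∫ z : α × α, r z.1 ∂Q2 = 1 := by
    rw [Stmt0Aux.integral_comp_fst Q hint_r.aestronglyMeasurable, hint1]
  -- swap symmetry facts
  have hswap_ga : ∫ z in B, r z.1 ∂Q2 = ∫ z in A, r z.2 ∂Q2 := by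
    have h1 : (fun z : α × α => A.indicator (fun w : α × α => r w.2) (Prod.swap z))
        = B.indicator (fun z : α × α => r z.1) := by
      ext z
      by_cases h : z ∈ B
      · have : Prod.swap z ∈ A := by
          simpa [hA_def, hB_def, Set.mem_setOf_eq] using h
        simp [Set.indicator, h, this]
      · have : Prod.swap z ∉ A := by
          simpa [hA_def, hB_def, Set.mem_setOf_eq] using h
        simp [Set.indicator, h, this]
    have h2 := Stmt0Aux.integral_swap_eq Q
      (F := A.indicator (fun w : α × α => r w.2))
      ((hinth.aestronglyMeasurable).indicator hA)
    rw [h1] at h2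
    rw [← integral_indicator hB, ← integral_indicator hA, ← h2]
  have hswap_diff : ∫ z in B, (r z.1 - r z.2) ∂Q2 = ∫ z in A, (r z.2 - r z.1) ∂Q2 := by
    have h1 : (fun z : α × α => A.indicator (fun w : α × α => r w.2 - r w.1) (Prod.swap z))
        = B.indicator (fun z : α × α => r z.1 - r z.2) := by
      ext z
      by_cases h : z ∈ B
      · have : Prod.swap z ∈ A := by
          simpa [hA_def, hB_def, Set.mem_setOf_eq] using h
        simp [Set.indicator, h, this]
      · have : Prod.swap z ∉ A := by
          simpa [hA_def, hB_def, Set.mem_setOf_eq] using h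
        simp [Set.indicator, h, this]
    have h2 := Stmt0Aux.integral_swap_eq Q
      (F := A.indicator (fun w : α × α => r w.2 - r w.1))
      (((hinth.sub hintg).aestronglyMeasurable).indicator hA)
    rw [h1] at h2
    rw [← integral_indicator hB, ← integral_indicator hA, ← h2]
  -- a := ∫ in A of r z.1
  set a : ℝ := ∫ z in A, r z.1 ∂Q2 with ha_def
  -- split of ∫ g over A and B
  have hsplit : a + ∫ z in B, r z.1 ∂Q2 = 1 := by
    have h1 : ∫ z in Aᶜ, r z.1 ∂Q2 = ∫ z in B, r z.1 ∂Q2 :=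
      setIntegral_congr_set hAcB
    have h2 := integral_add_compl hA hintg
    rw [h1] at h2
    rw [ha_def, h2, hg1]
  -- identity for the probability p
  have hp : ((P.prod Q) A).toReal = a := by
    have hprod := Stmt0Aux.prod_eq_withDensity P Q hac
    have hac2 : P.prod Q ≪ Q2 := by
      rw [hprod]; exact withDensity_absolutelyContinuous _ _
    have hrn : (P.prod Q).rnDeriv Q2 =ᵐ[Q2] fun z => P.rnDeriv Q z.1 := by
      rw [hprod]
      exact Measure.rnDeriv_withDensity Q2 (hfm.comp measurable_fst)
    have h1 := Measure.setIntegral_toReal_rnDeriv hac2 A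
    rw [← measureReal_def, ← h1, ha_def]
    apply integral_congr_ae
    apply ae_restrict_of_ae
    filter_upwards [hrn] with z hz
    rw [hz, hr]
  -- the absolute-difference integral
  set I : ℝ := ∫ z, |r z.1 - r z.2| ∂Q2 with hI_def
  have hIsplit : I = 2 - 4 * a := by
    have h1 : ∫ z in A, |r z.1 - r z.2| ∂Q2 = ∫ z in A, (r z.2 - r z.1) ∂Q2 := by
      apply setIntegral_congr_fun hA
      intro z hz
      have hlt : r z.1 < r z.2 := hz
      show |r z.1 - r z.2| = r z.2 - r z.1
      rw [abs_of_neg (by linarith)]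
      ring
    have h2 : ∫ z in B, |r z.1 - r z.2| ∂Q2 = ∫ z in B, (r z.1 - r z.2) ∂Q2 := by
      apply setIntegral_congr_fun hB
      intro z hz
      have hlt : r z.2 < r z.1 := hz
      show |r z.1 - r z.2| = r z.1 - r z.2
      rw [abs_of_pos (by linarith)]
    have h3 : ∫ z in Aᶜ, |r z.1 - r z.2| ∂Q2 = ∫ z in B, |r z.1 - r z.2| ∂Q2 :=
      setIntegral_congr_set hAcB
    have h4 := integral_add_compl hA hIint
    have h5 : ∫ z in A, (r z.2 - r z.1) ∂Q2
        = (∫ z in A, r z.2 ∂Q2) - ∫ z in A, r z.1 ∂Q2 :=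
      integral_sub (hinth.integrableOn) (hintg.integrableOn)
    have h6 : ∫ z in B, (r z.1 - r z.2) ∂Q2 = ∫ z in A, (r z.2 - r z.1) ∂Q2 := hswap_diff
    have h7 : ∫ z in A, r z.2 ∂Q2 = ∫ z in B, r z.1 ∂Q2 := hswap_ga.symm
    have h8 : ∫ z in B, r z.1 ∂Q2 = 1 - a := by linarith [hsplit]
    have : I = (∫ z in A, (r z.2 - r z.1) ∂Q2) + ∫ z in B, (r z.1 - r z.2) ∂Q2 := by
      rw [hI_def, ← h1, ← h2, ← h3]
      linarith [h4]
    rw [this, h6, h5, h7, h8]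
    ring
  -- lower bound : ∫ |r - 1| ≤ I
  have hlow : (∫ x, |r x - 1| ∂Q) ≤ I := by
    have hpt : ∀ x, |r x - 1| ≤ ∫ y, |r x - r y| ∂Q := by
      intro x
      have h1 : ∫ y, (r x - r y) ∂Q = r x - 1 := by
        rw [integral_sub (integrable_const _) hint_r, hint1, integral_const]
        simp
      calc |r x - 1| = |∫ y, (r x - r y) ∂Q| := by rw [h1]
        _ ≤ ∫ y, |r x - r y| ∂Q := by
            simpa [Real.norm_eq_abs] using
              norm_integral_le_integral_norm (fun y => r x - r y) (μ := Q)
    have hInt2 : Integrable (fun x => ∫ y, |r x - r y| ∂Q) Q := hIint.integral_prod_left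
    have h2 : (∫ x, |r x - 1| ∂Q) ≤ ∫ x, (∫ y, |r x - r y| ∂Q) ∂Q :=
      integral_mono ((hint_r.sub (integrable_const 1)).abs) hInt2 hpt
    have h3 : ∫ x, (∫ y, |r x - r y| ∂Q) ∂Q = I := by
      rw [hI_def, hQ2]
      exact (integral_integral (f := fun x y => |r x - r y|) hIint)
    linarith
  -- upper bound : I ≤ 2 ∫ |r - 1|
  have hup : I ≤ 2 * ∫ x, |r x - 1| ∂Q := by
    have hint_abs : Integrable (fun x => |r x - 1|) Q := (hint_r.sub (integrable_const 1)).abs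
    have h1 : Integrable (fun z : α × α => |r z.1 - 1|) Q2 :=
      Stmt0Aux.integrable_comp_fst Q hint_abs
    have h2 : Integrable (fun z : α × α => |r z.2 - 1|) Q2 :=
      Stmt0Aux.integrable_comp_snd Q hint_abs
    have h3 : I ≤ ∫ z : α × α, (|r z.1 - 1| + |r z.2 - 1|) ∂Q2 := by
      apply integral_mono hIint (h1.add h2)
      intro z
      calc |r z.1 - r z.2| = |(r z.1 - 1) + (1 - r z.2)| := by ring_nf
        _ ≤ |r z.1 - 1| + |1 - r z.2| := abs_add_le _ _
        _ = |r z.1 - 1| + |r z.2 - 1| := by rw [abs_sub_comm 1 (r z.2)]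
    have h4 : ∫ z : α × α, (|r z.1 - 1| + |r z.2 - 1|) ∂Q2
        = (∫ x, |r x - 1| ∂Q) + ∫ x, |r x - 1| ∂Q := by
      rw [integral_add h1 h2,
        Stmt0Aux.integral_comp_fst Q hint_abs.aestronglyMeasurable,
        Stmt0Aux.integral_comp_snd Q hint_abs.aestronglyMeasurable]
    linarith
  -- conclude
  rw [hp]
  constructor
  · linarith
  · linarith
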